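/- Let k ≥ 3, let R = {e^{2πij/k} : 0 ≤ j ≤ k − 1} ⊆ ℂ be the vertex set of a regular k-gon, and let P ⊆ R with |P| ≥ 3. Then for every finite set A ⊆ ℂ with |A| ≥ 2 there exist a constant c > 0 and a threshold N such that for all n ≥ N, S_P(n) ≥ c·n^{i_R(A)}. -/

import Mathlib

open MeasureTheory

noncomputable section

/-- `Q` is a similar copy of `P`: the image of `P` under an
orientation-preserving similarity `p ↦ z·p + w`, `z ≠ 0`. -/
def SimilarCopy (P Q : Finset ℂ) : Prop :=
  ∃ z w : ℂ, z ≠ 0 ∧ (Q : Set ℂ) = (fun p => z * p + w) '' (P : Set ℂ)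

/-- `SP P Q` is the number of subsets of `Q` that are similar copies of `P`. -/
def SP (P Q : Finset ℂ) : ℕ :=
  letI := Classical.decPred (SimilarCopy P)
  (Q.powerset.filter (SimilarCopy P)).card

/-- `Q` has no `m` points on a line: every collinear subset has at most `m - 1` points. -/
def NoMOnLine (m : ℕ) (Q : Finset ℂ) : Prop :=
  ∀ S ⊆ Q, Collinear ℝ (S : Set ℂ) → S.card ≤ m - 1

/-- `Q` has `m` points on a line. -/
def HasMOnLine (m : ℕ) (Q : Finset ℂ) : Prop :=
  ∃ S ⊆ Q, S.card = m ∧ Collinear ℝ (S : Set ℂ)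

/-- The number of orientation-preserving isometries of `ℂ` mapping `P` onto itself,
i.e. maps `p ↦ u·p + w` with `|u| = 1` fixing `P` setwise. -/
def IsoPlusCard (P : Finset ℂ) : ℕ :=
  {uw : ℂ × ℂ | ‖uw.1‖ = 1 ∧
    (fun p => uw.1 * p + uw.2) '' (P : Set ℂ) = (P : Set ℂ)}.ncard

/-- The index of `A` with respect to the pattern `P`. -/
def indexP (P A : Finset ℂ) : ℝ :=
  Real.log ((IsoPlusCard P : ℝ) * SP P A + A.card) / Real.log A.card

/-- `SPnm P n m` : the maximum of `SP P Q` over `n`-point sets `Q`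
with no `m` points on a line. -/
def SPnm (P : Finset ℂ) (n m : ℕ) : ℕ :=
  sSup {k | ∃ Q : Finset ℂ, Q.card = n ∧ NoMOnLine m Q ∧ SP P Q = k}

/-- `SPn P n` : the maximum of `SP P Q` over all `n`-point sets `Q`. -/
def SPn (P : Finset ℂ) (n : ℕ) : ℕ :=
  sSup {k | ∃ Q : Finset ℂ, Q.card = n ∧ SP P Q = k}

/-- The Minkowski sum `B + C` of two finite sets of complex numbers. -/
def minkSum (B C : Finset ℂ) : Finset ℂ :=
  letI := Classical.decEq ℂ
  Finset.image₂ (· + ·) B C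

/-- `Q` contains four pairwise distinct points forming a parallelogram. -/
def HasParallelogram (Q : Finset ℂ) : Prop :=
  ∃ p₁ ∈ Q, ∃ p₂ ∈ Q, ∃ p₃ ∈ Q, ∃ p₄ ∈ Q,
    p₁ ≠ p₂ ∧ p₁ ≠ p₃ ∧ p₁ ≠ p₄ ∧ p₂ ≠ p₃ ∧ p₂ ≠ p₄ ∧ p₃ ≠ p₄ ∧
    p₂ - p₁ = p₄ - p₃

/-- `Q` is parallelogram-free: no 3 collinear points and no parallelogram. -/
def ParallelogramFree (Q : Finset ℂ) : Prop :=
  (∀ S ⊆ Q, Collinear ℝ (S : Set ℂ) → S.card ≤ 2) ∧ ¬ HasParallelogram Q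

/-- The set `Q(P, A, u, v) = ⋃_{p ∈ P} (u·p + (v·p − p + 1)·A)`. -/
def Qset (P A : Finset ℂ) (u v : ℂ) : Finset ℂ :=
  letI := Classical.decEq ℂ
  P.biUnion fun p => A.image fun a => u * p + (v * p - p + 1) * a

/-- The vertex set of the regular `k`-gon. -/
def Rpoly (k : ℕ) : Finset ℂ :=
  letI := Classical.decEq ℂ
  (Finset.range k).image fun j : ℕ => Complex.exp (2 * Real.pi * Complex.I * (j : ℂ) / (k : ℂ))

/-- `ω = e^{2πi/3}`. -/
def omega3 : ℂ := Complex.exp (2 * Real.pi * Complex.I / 3)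

/-- The vertex set `{1, ω, ω²}` of an equilateral triangle. -/
def triEq : Finset ℂ :=
  letI := Classical.decEq ℂ
  {1, omega3, omega3 ^ 2}

-- ζ
def zk (k : ℕ) : ℂ := Complex.exp (2 * Real.pi * Complex.I / (k : ℂ))

lemma zk_pow_k {k : ℕ} (hk : k ≠ 0) : zk k ^ k = 1 := by
  rw [zk, ← Complex.exp_nat_mul]
  have : (k : ℂ) ≠ 0 := Nat.cast_ne_zero.mpr hk
  rw [show (k : ℂ) * (2 * Real.pi * Complex.I / k) = 2 * Real.pi * Complex.I by
    field_simp]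
  exact Complex.exp_two_pi_mul_I

lemma zk_pow_mod {k : ℕ} (hk : k ≠ 0) (m : ℕ) : zk k ^ (m % k) = zk k ^ m := by
  conv_rhs => rw [← Nat.div_add_mod m k]
  rw [pow_add, pow_mul, zk_pow_k hk, one_pow, one_mul]

lemma zk_pow_val_add {k : ℕ} [NeZero k] (a b : ZMod k) :
    zk k ^ (a + b).val = zk k ^ a.val * zk k ^ b.val := by
  rw [ZMod.val_add, zk_pow_mod (NeZero.ne k), pow_add]

lemma mem_Rpoly {k : ℕ} [NeZero k] {p : ℂ} (hp : p ∈ Rpoly k) :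
    ∃ i : ZMod k, p = zk k ^ i.val := by
  classical
  rw [Rpoly, Finset.mem_image] at hp
  obtain ⟨j, hj, rfl⟩ := hp
  refine ⟨(j : ZMod k), ?_⟩
  rw [ZMod.val_natCast, zk_pow_mod (NeZero.ne k), zk, ← Complex.exp_nat_mul]
  ring_nf

def boxMap (k : ℕ) [NeZero k] (c : ZMod k → ℕ) : ℂ :=
  ∑ j : ZMod k, (c j : ℂ) * zk k ^ j.val

def Zbox (k : ℕ) [NeZero k] (M : ℕ) : Finset ℂ :=
  letI := Classical.decEq ℂ
  (Fintype.piFinset fun _ : ZMod k => Finset.range M).image (boxMap k)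

lemma Zbox_mono {k : ℕ} [NeZero k] {M M' : ℕ} (h : M ≤ M') : Zbox k M ⊆ Zbox k M' := by
  classical
  apply Finset.image_subset_image
  intro c hc
  simp only [Fintype.mem_piFinset, Finset.mem_range] at hc ⊢
  exact fun j => lt_of_lt_of_le (hc j) h

lemma mem_Zbox {k : ℕ} [NeZero k] {M : ℕ} {z : ℂ} :
    z ∈ Zbox k M ↔ ∃ c : ZMod k → ℕ, (∀ j, c j < M) ∧ boxMap k c = z := by
  classical
  simp [Zbox, Finset.mem_image, Fintype.mem_piFinset]

lemma Zbox_mul_zk {k : ℕ} [NeZero k] {M : ℕ} {z : ℂ} (hz : z ∈ Zbox k M) (i : ZMod k) :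
    z * zk k ^ i.val ∈ Zbox k M := by
  rw [mem_Zbox] at hz ⊢
  obtain ⟨c, hc, rfl⟩ := hz
  refine ⟨fun j => c (j - i), fun j => hc _, ?_⟩
  rw [boxMap, boxMap, Finset.sum_mul]
  refine (Fintype.sum_equiv (Equiv.addRight i) _ _ fun j => ?_).symm
  simp only [Equiv.coe_addRight, add_sub_cancel_right]
  rw [mul_assoc, ← zk_pow_val_add]

lemma boxMap_add {k : ℕ} [NeZero k] (c c' : ZMod k → ℕ) :
    boxMap k (fun j => c j + c' j) = boxMap k c + boxMap k c' := by
  rw [boxMap, boxMap, boxMap, ← Finset.sum_add_distrib]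
  congr 1; funext j; push_cast; ring

lemma Zbox_add {k : ℕ} [NeZero k] {M : ℕ} {z w : ℂ} (hz : z ∈ Zbox k M) (hw : w ∈ Zbox k M) :
    z + w ∈ Zbox k (2 * M) := by
  rw [mem_Zbox] at hz hw ⊢
  obtain ⟨c, hc, rfl⟩ := hz
  obtain ⟨c', hc', rfl⟩ := hw
  refine ⟨fun j => c j + c' j, fun j => ?_, boxMap_add c c'⟩
  dsimp only
  have := hc j; have := hc' j; omega

lemma card_Zbox_lower {k : ℕ} [NeZero k] (M : ℕ) : M ≤ (Zbox k M).card := by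
  classical
  have h : (Finset.range M).image (Nat.cast : ℕ → ℂ) ⊆ Zbox k M := by
    intro z hz
    rw [Finset.mem_image] at hz
    obtain ⟨a, ha, rfl⟩ := hz
    rw [Finset.mem_range] at ha
    rw [mem_Zbox]
    refine ⟨fun j => if j = 0 then a else 0, fun j => by dsimp only; split <;> omega, ?_⟩
    rw [boxMap, Finset.sum_eq_single 0]
    · simp
    · intro b _ hb; simp [hb]
    · simp
  calc M = ((Finset.range M).image (Nat.cast : ℕ → ℂ)).card := by
        rw [Finset.card_image_of_injective _ Nat.cast_injective, Finset.card_range]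
    _ ≤ _ := Finset.card_le_card h

lemma card_Zbox_cover {k : ℕ} [NeZero k] {M : ℕ} (hM : 0 < M) (t : ℕ) :
    (Zbox k (t * M)).card ≤ t ^ k * (Zbox k M).card := by
  classical
  have hsub : Zbox k (t * M) ⊆ Finset.image₂ (· + ·)
      ((Fintype.piFinset fun _ : ZMod k => Finset.range t).image
        (fun d => boxMap k (fun j => M * d j))) (Zbox k M) := by
    intro z hz
    rw [mem_Zbox] at hz
    obtain ⟨c, hc, rfl⟩ := hz
    rw [Finset.mem_image₂]
    refine ⟨boxMap k (fun j => M * (c j / M)), ?_, boxMap k (fun j => c j % M), ?_, ?_⟩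
    · rw [Finset.mem_image]
      refine ⟨fun j => c j / M, ?_, rfl⟩
      rw [Fintype.mem_piFinset]
      intro j
      rw [Finset.mem_range, Nat.div_lt_iff_lt_mul hM]
      have := hc j; omega
    · rw [mem_Zbox]
      exact ⟨_, fun j => Nat.mod_lt _ hM, rfl⟩
    · rw [← boxMap_add]
      congr 1; funext j; exact Nat.div_add_mod (c j) M
  calc (Zbox k (t * M)).card ≤ _ := Finset.card_le_card hsub
    _ ≤ _ := by
        refine le_trans (Finset.card_image₂_le _ _ _) ?_
        gcongr
        refine le_trans Finset.card_image_le ?_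
        rw [Fintype.card_piFinset]
        simp [ZMod.card]

lemma SP_eq (P Q : Finset ℂ) {inst : DecidablePred (SimilarCopy P)} :
    SP P Q = (@Finset.filter _ (SimilarCopy P) inst Q.powerset).card := by
  unfold SP; congr!

lemma SP_mono (P : Finset ℂ) {Q Q' : Finset ℂ} (h : Q ⊆ Q') : SP P Q ≤ SP P Q' := by
  classical
  rw [SP_eq, SP_eq]
  exact Finset.card_le_card (Finset.filter_subset_filter _ (Finset.powerset_mono.mpr h))

lemma SP_le_pow (P Q : Finset ℂ) : SP P Q ≤ 2 ^ Q.card := by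
  classical
  rw [SP_eq]
  exact le_trans (Finset.card_le_card (Finset.filter_subset _ _))
    (le_of_eq (Finset.card_powerset Q))

lemma SP_le_SPn (P Q : Finset ℂ) {n : ℕ} (h : Q.card = n) : SP P Q ≤ SPn P n := by
  apply le_csSup
  · refine ⟨2 ^ n, ?_⟩
    rintro x ⟨Q', hQ', rfl⟩
    rw [← hQ']
    exact SP_le_pow P Q'
  · exact ⟨Q, h, rfl⟩

lemma main_count {k : ℕ} [NeZero k] {P : Finset ℂ} (hPsub : P ⊆ Rpoly k)
    (hP : 3 ≤ P.card) {M : ℕ} (hM : 0 < M) :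
    ((Zbox k M).card - 1) * (Zbox k M).card ≤ P.card ^ 2 * SP P (Zbox k (2 * M)) := by
  classical
  obtain ⟨p₁, hp₁, p₂, hp₂, hpne⟩ := Finset.one_lt_card.mp (by omega : 1 < P.card)
  set Z := Zbox k M with hZ
  set s : Finset (ℂ × ℂ) := (Z.erase 0) ×ˢ Z with hs
  set F : ℂ × ℂ → Finset ℂ := fun zw => P.image (fun p => zw.1 * p + zw.2) with hF
  -- each F zw is a similar copy of P inside Zbox k (2*M)
  have himg : ∀ zw ∈ s, F zw ∈ (Zbox k (2 * M)).powerset.filter (SimilarCopy P) := by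
    rintro ⟨z, w⟩ hzw
    rw [hs, Finset.mem_product] at hzw
    obtain ⟨hz, hw⟩ := hzw
    have hz0 : z ≠ 0 := Finset.ne_of_mem_erase hz
    have hzZ : z ∈ Z := Finset.mem_of_mem_erase hz
    rw [Finset.mem_filter, Finset.mem_powerset]
    constructor
    · intro q hq
      rw [hF, Finset.mem_image] at hq
      obtain ⟨p, hp, rfl⟩ := hq
      obtain ⟨i, rfl⟩ := mem_Rpoly (hPsub hp)
      exact Zbox_add (Zbox_mul_zk hzZ i) hw
    · exact ⟨z, w, hz0, by rw [hF, Finset.coe_image]⟩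
  -- fibers of F on s have at most P.card ^ 2 elements
  have hfiber : ∀ Q₀ ∈ s.image F, (s.filter (fun zw => F zw = Q₀)).card ≤ P.card ^ 2 := by
    intro Q₀ hQ₀
    obtain ⟨⟨z₀, w₀⟩, hzw₀, hFzw₀⟩ := Finset.mem_image.mp hQ₀
    have hz₀0 : z₀ ≠ 0 := Finset.ne_of_mem_erase (Finset.mem_product.mp (hs ▸ hzw₀)).1
    have hcard : Q₀.card = P.card := by
      rw [← hFzw₀, hF]
      exact Finset.card_image_of_injective _ (fun a b hab => by
        have hab' : z₀ * a + w₀ = z₀ * b + w₀ := hab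
        exact mul_left_cancel₀ hz₀0 (add_right_cancel hab'))
    have hinj : (s.filter (fun zw => F zw = Q₀)).card ≤ (Q₀ ×ˢ Q₀).card := by
      apply Finset.card_le_card_of_injOn
        (fun zw => (zw.1 * p₁ + zw.2, zw.1 * p₂ + zw.2))
      · rintro ⟨z, w⟩ hzw
        rw [Finset.mem_coe, Finset.mem_filter] at hzw
        obtain ⟨_, hFQ⟩ := hzw
        rw [Finset.mem_coe, Finset.mem_product]
        constructor
        · rw [← hFQ, hF, Finset.mem_image]; exact ⟨p₁, hp₁, rfl⟩
        · rw [← hFQ, hF, Finset.mem_image]; exact ⟨p₂, hp₂, rfl⟩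
      · rintro ⟨z, w⟩ _ ⟨z', w'⟩ _ heq
        simp only [Prod.mk.injEq] at heq
        obtain ⟨h1, h2⟩ := heq
        have hzz' : z = z' := by
          have : (z - z') * (p₁ - p₂) = 0 := by ring_nf; linear_combination h1 - h2
          rcases mul_eq_zero.mp this with h | h
          · exact sub_eq_zero.mp h
          · exact absurd (sub_eq_zero.mp h) hpne
        have hww' : w = w' := by
          have := h1; rw [hzz'] at this
          exact add_left_cancel this
        simp [hzz', hww']
    calc (s.filter (fun zw => F zw = Q₀)).card ≤ (Q₀ ×ˢ Q₀).card := hinj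
      _ = P.card ^ 2 := by rw [Finset.card_product, hcard, sq]
  have hcount : s.card ≤ P.card ^ 2 * (s.image F).card :=
    Finset.card_le_mul_card_image s (P.card ^ 2) hfiber
  have himage_le : (s.image F).card ≤ SP P (Zbox k (2 * M)) := by
    rw [SP_eq]
    apply Finset.card_le_card
    intro Q₀ hQ₀
    obtain ⟨zw, hzw, rfl⟩ := Finset.mem_image.mp hQ₀
    exact himg zw hzw
  have hscard : s.card = (Z.card - 1) * Z.card := by
    rw [hs, Finset.card_product, Finset.card_erase_of_mem]
    rw [hZ, mem_Zbox]
    exact ⟨fun _ => 0, fun j => hM, by simp [boxMap]⟩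
  calc (Z.card - 1) * Z.card = s.card := hscard.symm
    _ ≤ P.card ^ 2 * (s.image F).card := hcount
    _ ≤ _ := by exact Nat.mul_le_mul_left _ himage_le

lemma affine_eq_of_two {r₀ r₁ α β α' β' : ℂ} (hrne : r₀ ≠ r₁)
    (h0 : α * r₀ + β = α' * r₀ + β') (h1 : α * r₁ + β = α' * r₁ + β') :
    α = α' ∧ β = β' := by
  have hzz : α = α' := by
    have : (α - α') * (r₀ - r₁) = 0 := by linear_combination h0 - h1
    rcases mul_eq_zero.mp this with h | h
    · exact sub_eq_zero.mp h
    · exact absurd (sub_eq_zero.mp h) hrne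
  refine ⟨hzz, ?_⟩
  rw [hzz] at h0
  exact add_left_cancel h0

lemma isoCard_mul_SP_le {R A : Finset ℂ} (hR : 1 < R.card) :
    IsoPlusCard R * SP R A + A.card ≤ A.card * A.card := by
  classical
  obtain ⟨r₀, hr₀, r₁, hr₁, hrne⟩ := Finset.one_lt_card.mp hR
  set IsoSet : Set (ℂ × ℂ) := {uw : ℂ × ℂ | ‖uw.1‖ = 1 ∧
    (fun p => uw.1 * p + uw.2) '' (R : Set ℂ) = (R : Set ℂ)} with hIsoSet
  have hfin : IsoSet.Finite := by
    apply Set.Finite.of_finite_image (f := fun uw => (uw.1 * r₀ + uw.2, uw.1 * r₁ + uw.2))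
    · apply Set.Finite.subset ((R ×ˢ R : Finset (ℂ × ℂ)) : Set (ℂ × ℂ)).toFinite
      rintro _ ⟨⟨u, w⟩, huw, rfl⟩
      obtain ⟨_, him⟩ := huw
      simp only [Finset.coe_product, Set.mem_prod]
      constructor
      · have : u * r₀ + w ∈ ((fun p => u * p + w) '' (R : Set ℂ)) := ⟨r₀, hr₀, rfl⟩
        rwa [him] at this
      · have : u * r₁ + w ∈ ((fun p => u * p + w) '' (R : Set ℂ)) := ⟨r₁, hr₁, rfl⟩
        rwa [him] at this
    · rintro ⟨u, w⟩ _ ⟨u', w'⟩ _ heq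
      simp only [Prod.mk.injEq] at heq
      obtain ⟨h, h'⟩ := affine_eq_of_two hrne heq.1 heq.2
      simp [h, h']
  set Iso : Finset (ℂ × ℂ) := hfin.toFinset with hIso
  have hIcard : IsoPlusCard R = Iso.card := by
    have h1 : IsoPlusCard R = IsoSet.ncard := rfl
    rw [h1, Set.ncard_eq_toFinset_card _ hfin]
  set copies : Finset (Finset ℂ) := A.powerset.filter (SimilarCopy R) with hcopies
  have hScard : SP R A = copies.card := SP_eq R A
  -- witness functions
  have hchoice : ∀ Q₀ ∈ copies, ∃ zw : ℂ × ℂ, zw.1 ≠ 0 ∧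
      (Q₀ : Set ℂ) = (fun p => zw.1 * p + zw.2) '' (R : Set ℂ) := by
    intro Q₀ hQ₀
    obtain ⟨z, w, hz, him⟩ := (Finset.mem_filter.mp hQ₀).2
    exact ⟨(z, w), hz, him⟩
  choose! zw hzw0 hzwim using hchoice
  have hprod : (Iso ×ˢ copies).card ≤ ((A ×ˢ A).filter fun p => p.1 ≠ p.2).card := by
    apply Finset.card_le_card_of_injOn (fun x =>
      ((zw x.2).1 * (x.1.1 * r₀ + x.1.2) + (zw x.2).2,
       (zw x.2).1 * (x.1.1 * r₁ + x.1.2) + (zw x.2).2))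
    · rintro ⟨⟨u, w⟩, Q₀⟩ hx
      rw [Finset.mem_coe, Finset.mem_product] at hx
      obtain ⟨hu, hQ₀⟩ := hx
      rw [hIso, Set.Finite.mem_toFinset] at hu
      obtain ⟨habs, him⟩ := hu
      have hu0 : u ≠ 0 := by
        intro h; rw [h] at habs; simp at habs
      have hQ₀A : Q₀ ⊆ A := Finset.mem_powerset.mp (Finset.mem_filter.mp hQ₀).1
      have hmem : ∀ r ∈ R, (zw Q₀).1 * (u * r + w) + (zw Q₀).2 ∈ A := by
        intro r hr
        have h1 : u * r + w ∈ ((fun p => u * p + w) '' (R : Set ℂ)) := ⟨r, hr, rfl⟩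
        rw [him] at h1
        have h2 : (zw Q₀).1 * (u * r + w) + (zw Q₀).2 ∈
            ((fun p => (zw Q₀).1 * p + (zw Q₀).2) '' (R : Set ℂ)) := ⟨_, h1, rfl⟩
        rw [← hzwim Q₀ hQ₀] at h2
        exact hQ₀A h2
      rw [Finset.mem_coe, Finset.mem_filter, Finset.mem_product]
      refine ⟨⟨hmem r₀ hr₀, hmem r₁ hr₁⟩, ?_⟩
      simp only [ne_eq, Prod.fst, Prod.snd]
      intro hcontra
      have h1 : u * r₀ + w = u * r₁ + w := by
        have := mul_left_cancel₀ (hzw0 Q₀ hQ₀) (add_right_cancel hcontra)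
        rw [this]
      have : r₀ = r₁ := mul_left_cancel₀ hu0 (add_right_cancel h1)
      exact hrne this
    · rintro ⟨⟨u, w⟩, Q₀⟩ hx ⟨⟨u', w'⟩, Q₁⟩ hy heq
      rw [Finset.mem_coe, Finset.mem_product] at hx hy
      obtain ⟨hu, hQ₀⟩ := hx
      obtain ⟨hu', hQ₁⟩ := hy
      rw [hIso, Set.Finite.mem_toFinset] at hu hu'
      obtain ⟨habs, him⟩ := hu
      obtain ⟨habs', him'⟩ := hu'
      simp only [Prod.mk.injEq] at heq
      have h0 : ((zw Q₀).1 * u) * r₀ + ((zw Q₀).1 * w + (zw Q₀).2)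
          = ((zw Q₁).1 * u') * r₀ + ((zw Q₁).1 * w' + (zw Q₁).2) := by
        linear_combination heq.1
      have h1 : ((zw Q₀).1 * u) * r₁ + ((zw Q₀).1 * w + (zw Q₀).2)
          = ((zw Q₁).1 * u') * r₁ + ((zw Q₁).1 * w' + (zw Q₁).2) := by
        linear_combination heq.2
      obtain ⟨hα, hβ⟩ := affine_eq_of_two hrne h0 h1
      have himQ : ∀ (Q : Finset ℂ) (u₀ w₀ : ℂ),
          (fun p => u₀ * p + w₀) '' (R : Set ℂ) = (R : Set ℂ) →
          (Q : Set ℂ) = (fun p => (zw Q).1 * p + (zw Q).2) '' (R : Set ℂ) →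
          (Q : Set ℂ) = (fun p => ((zw Q).1 * u₀) * p + ((zw Q).1 * w₀ + (zw Q).2)) ''
            (R : Set ℂ) := by
        intro Q u₀ w₀ him₀ hQ
        rw [hQ]
        conv_lhs => rw [← him₀]
        rw [Set.image_image]
        exact Set.image_congr fun p _ => by ring
      have hQeq : Q₀ = Q₁ := by
        apply Finset.coe_injective
        rw [himQ Q₀ u w him (hzwim Q₀ hQ₀), himQ Q₁ u' w' him' (hzwim Q₁ hQ₁), hα, hβ]
      subst hQeq
      have hz0 := hzw0 Q₀ hQ₀
      have huu' : u = u' := mul_left_cancel₀ hz0 hα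
      have hww' : w = w' := by
        have := add_right_cancel hβ
        exact mul_left_cancel₀ hz0 this
      simp [huu', hww']
  have hdiag : A.card ≤ ((A ×ˢ A).filter fun p => p.1 = p.2).card := by
    have hsub : A.image (fun a => (a, a)) ⊆ (A ×ˢ A).filter fun p => p.1 = p.2 := by
      intro x hx
      obtain ⟨a, ha, rfl⟩ := Finset.mem_image.mp hx
      rw [Finset.mem_filter, Finset.mem_product]
      exact ⟨⟨ha, ha⟩, rfl⟩
    calc A.card = (A.image (fun a => (a, a))).card :=
          (Finset.card_image_of_injective _ (fun a b hab => (Prod.mk.injEq _ _ _ _).mp hab |>.1)).symm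
      _ ≤ _ := Finset.card_le_card hsub
  have hfilter : ((A ×ˢ A).filter fun p => p.1 ≠ p.2).card ≤ A.card * A.card - A.card := by
    have := Finset.card_filter_add_card_filter_not (s := A ×ˢ A)
      (fun p : ℂ × ℂ => p.1 = p.2)
    rw [Finset.card_product] at this
    simp only [ne_eq] at this ⊢
    omega
  have : Iso.card * copies.card ≤ A.card * A.card - A.card := by
    rw [← Finset.card_product]
    exact le_trans hprod hfilter
  rw [hIcard, hScard]
  have hAA : A.card ≤ A.card * A.card := by
    rcases Nat.eq_zero_or_pos A.card with h | h
    · simp [h]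
    · exact Nat.le_mul_of_pos_left _ h
  omega

lemma indexP_le_two {R A : Finset ℂ} (hR : 1 < R.card) (hA : 2 ≤ A.card) :
    indexP R A ≤ 2 := by
  rw [indexP]
  have ha : (1 : ℝ) < (A.card : ℝ) := by exact_mod_cast (by omega : 1 < A.card)
  have ha0 : (0 : ℝ) < (A.card : ℝ) := by linarith
  rw [div_le_iff₀ (Real.log_pos ha)]
  have h1 : (IsoPlusCard R : ℝ) * SP R A + A.card ≤ (A.card : ℝ) * A.card := by
    have h := isoCard_mul_SP_le (A := A) hR
    have := (Nat.cast_le (α := ℝ)).mpr h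
    push_cast at this
    linarith
  have hpos : (0 : ℝ) < (IsoPlusCard R : ℝ) * SP R A + A.card := by positivity
  calc Real.log ((IsoPlusCard R : ℝ) * SP R A + A.card)
      ≤ Real.log ((A.card : ℝ) * A.card) := Real.log_le_log hpos h1
    _ = 2 * Real.log A.card := by
        rw [Real.log_mul (ne_of_gt ha0) (ne_of_gt ha0), two_mul]


set_option maxHeartbeats 1000000 in
/-- If `P` is a subset (with at least 3 points) of the vertex set `R` of a regular
`k`-gon, then for every finite `A` with `|A| ≥ 2`, `S_P(n) ≥ c·n^{i_R(A)}` for some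
`c > 0` and all large `n`. -/
theorem stmt14 (k : ℕ) (hk : 3 ≤ k) (P : Finset ℂ) (hPsub : P ⊆ Rpoly k)
    (hP : 3 ≤ P.card) (A : Finset ℂ) (hA : 2 ≤ A.card) :
    ∃ c : ℝ, 0 < c ∧ ∃ N : ℕ, ∀ n : ℕ, N ≤ n →
      c * (n : ℝ) ^ indexP (Rpoly k) A ≤ (SPn P n : ℝ) := by
  haveI : NeZero k := ⟨by omega⟩
  classical
  have hRcard : 1 < (Rpoly k).card :=
    lt_of_lt_of_le (by omega) (le_trans hP (Finset.card_le_card hPsub))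
  have hp0 : (0 : ℝ) < (P.card : ℝ) := by exact_mod_cast (by omega : 0 < P.card)
  set c : ℝ := 1 / (2 * 16 ^ k * (P.card : ℝ) ^ 2) with hc
  have hc0 : 0 < c := by positivity
  refine ⟨c, hc0, max ((Zbox k 2).card) (2 * 4 ^ k), fun n hn => ?_⟩
  have hn1 : (Zbox k 2).card ≤ n := le_trans (le_max_left _ _) hn
  have hn2 : 2 * 4 ^ k ≤ n := le_trans (le_max_right _ _) hn
  have h4k : (1:ℕ) ≤ 4 ^ k := Nat.one_le_pow _ _ (by norm_num)
  have hnpos : 2 ≤ n := by omega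
  set pred : ℕ → Prop := fun M => (Zbox k (2 * M)).card ≤ n with hpred
  set M := Nat.findGreatest pred n with hMdef
  have hpred1 : pred 1 := by
    rw [hpred]
    simpa using hn1
  have hM1 : 1 ≤ M := Nat.le_findGreatest (by omega) hpred1
  have hMspec : (Zbox k (2 * M)).card ≤ n :=
    Nat.findGreatest_spec (P := pred) (m := 1) (by omega) hpred1
  have hMle : M ≤ n := Nat.findGreatest_le n
  have hMlt : M < n := by
    rcases lt_or_eq_of_le hMle with h | h
    · exact h
    · exfalso
      have h2 : 2 * n ≤ (Zbox k (2 * n)).card := card_Zbox_lower (2 * n)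
      rw [h] at hMspec
      omega
  have hnext : n < (Zbox k (2 * (M + 1))).card := by
    by_contra h
    push_neg at h
    exact Nat.findGreatest_is_greatest (P := pred) (n := n) (k := M + 1)
      (by rw [← hMdef]; omega) (by omega) h
  have h45 : (Zbox k (2 * (M + 1))).card ≤ 4 ^ k * (Zbox k M).card :=
    le_trans (Finset.card_le_card (Zbox_mono (by omega)))
      (card_Zbox_cover (by omega) 4)
  have hcount := main_count hPsub hP (show 0 < M by omega)
  obtain ⟨Q', hQ'sub, hQ'card⟩ := Infinite.exists_superset_card_eq (Zbox k (2 * M)) n hMspec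
  have hSP : SP P (Zbox k (2 * M)) ≤ SPn P n :=
    le_trans (SP_mono P hQ'sub) (SP_le_SPn P Q' hQ'card)
  -- pass to the reals
  set x : ℝ := ((Zbox k M).card : ℝ) with hx
  have hxM : 1 ≤ (Zbox k M).card := le_trans hM1 (card_Zbox_lower M)
  have hx1 : (1 : ℝ) ≤ x := by rw [hx]; exact_mod_cast hxM
  have hxlarge : (n : ℝ) < 4 ^ k * x := by
    rw [hx]
    exact_mod_cast lt_of_lt_of_le hnext h45
  have h4k0 : (0 : ℝ) < 4 ^ k := by positivity
  have hy2 : (2 : ℝ) * 4 ^ k ≤ (n : ℝ) := by exact_mod_cast hn2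
  have hfinal : (x - 1) * x ≤ (P.card : ℝ) ^ 2 * (SPn P n : ℝ) := by
    have h1 : ((Zbox k M).card - 1) * (Zbox k M).card ≤ P.card ^ 2 * SPn P n :=
      le_trans hcount (Nat.mul_le_mul_left _ hSP)
    have h2 := (Nat.cast_le (α := ℝ)).mpr h1
    push_cast [Nat.cast_sub hxM] at h2
    exact h2
  have hkey : (n : ℝ) ^ 2 / (2 * 16 ^ k) ≤ (x - 1) * x := by
    have h16 : (16 : ℝ) ^ k = 4 ^ k * 4 ^ k := by
      rw [← mul_pow]; norm_num
    rw [div_le_iff₀ (by positivity)]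
    set y : ℝ := (n : ℝ) / 4 ^ k with hy
    have hyx : y < x := by
      rw [hy, div_lt_iff₀ h4k0]; linarith [hxlarge]
    have hy2' : (2 : ℝ) ≤ y := by
      rw [hy, le_div_iff₀ h4k0]; linarith
    have hn_eq : (n : ℝ) = y * 4 ^ k := (div_mul_cancel₀ (n : ℝ) (ne_of_gt h4k0)).symm
    have step : y ^ 2 ≤ 2 * ((x - 1) * x) := by
      nlinarith [mul_nonneg (sub_nonneg.mpr hyx.le) (by linarith : (0:ℝ) ≤ x + y - 1),
        mul_nonneg (by linarith : (0:ℝ) ≤ y) (by linarith : (0:ℝ) ≤ y - 2)]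
    calc (n : ℝ) ^ 2 = y ^ 2 * 16 ^ k := by rw [hn_eq, h16]; ring
      _ ≤ (2 * ((x - 1) * x)) * 16 ^ k := by
          exact mul_le_mul_of_nonneg_right step (by positivity)
      _ = (x - 1) * x * (2 * 16 ^ k) := by ring
  have hrpow : (n : ℝ) ^ indexP (Rpoly k) A ≤ (n : ℝ) ^ 2 := by
    have h1 : (1 : ℝ) ≤ (n : ℝ) := by exact_mod_cast (by omega : 1 ≤ n)
    have := Real.rpow_le_rpow_of_exponent_le h1 (indexP_le_two hRcard hA)
    calc (n : ℝ) ^ indexP (Rpoly k) A ≤ (n : ℝ) ^ (2 : ℝ) := this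
      _ = (n : ℝ) ^ 2 := by
        rw [show ((2:ℝ)) = ((2:ℕ):ℝ) by norm_num, Real.rpow_natCast]
  have hn0 : (0 : ℝ) ≤ (n : ℝ) := Nat.cast_nonneg n
  calc c * (n : ℝ) ^ indexP (Rpoly k) A ≤ c * (n : ℝ) ^ 2 := by
        apply mul_le_mul_of_nonneg_left hrpow (le_of_lt hc0)
    _ ≤ (SPn P n : ℝ) := by
        rw [hc]
        rw [div_mul_eq_mul_div, one_mul, div_le_iff₀ (by positivity)]
        have hchain : (n : ℝ) ^ 2 / (2 * 16 ^ k) ≤ (P.card : ℝ) ^ 2 * (SPn P n : ℝ) :=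
          le_trans hkey hfinal
        rw [div_le_iff₀ (by positivity : (0:ℝ) < 2 * 16 ^ k)] at hchain
        nlinarith [hchain]
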